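/- Specialization of Faà di Bruno to the exponential: the ℓ-th derivative with respect to p of exp(p·x₁ + ... + p^N·x_N) equals exp(p·x₁+...+p^N·x_N) times ∑_{λ ⊢ ℓ} (ℓ!/(a₁!···a_k!)) · (1/(β₁!···β_k!)) · ∏_{i=1}^k (∑_{j=1}^N (j)_{a_i} p^{j-a_i} x_j). -/

import Mathlib

noncomputable def gfun (N : ℕ) (x : ℕ → ℝ) (a : ℕ) (q : ℝ) : ℝ :=
  ∑ j ∈ Finset.Icc 1 N, (j.descFactorial a : ℝ) * q ^ (j - a) * x j

lemma hasDerivAt_gfun (N : ℕ) (x : ℕ → ℝ) (a : ℕ) (p : ℝ) :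
    HasDerivAt (gfun N x a) (gfun N x (a+1) p) p := by
  unfold gfun
  apply HasDerivAt.fun_sum
  intro j _
  have h1 : HasDerivAt (fun q : ℝ => (j.descFactorial a : ℝ) * q ^ (j - a) * x j)
      ((j.descFactorial a : ℝ) * (((j - a : ℕ) : ℝ) * p ^ (j - a - 1)) * x j) p :=
    ((hasDerivAt_pow (j - a) p).const_mul _).mul_const _
  refine h1.congr_deriv ?_
  rw [Nat.descFactorial_succ]
  have he : j - (a+1) = j - a - 1 := by omega
  rw [he]
  push_cast
  ring

lemma hasDerivAt_multiset_prod (G : ℕ → ℝ → ℝ) (G' : ℕ → ℝ) (p : ℝ)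
    (h : ∀ a, HasDerivAt (G a) (G' a) p) (s : Multiset ℕ) :
    HasDerivAt (fun q => (s.map (fun a => G a q)).prod)
      ((s.map (fun a => G' a * ((s.erase a).map (fun b => G b p)).prod)).sum) p := by
  induction s using Multiset.induction_on with
  | empty => simpa using hasDerivAt_const p (1 : ℝ)
  | cons a s ih =>
    have key : ∀ b ∈ s, (((a ::ₘ s).erase b).map (fun c => G c p)).prod
        = G a p * ((s.erase b).map (fun c => G c p)).prod := by
      intro b hb
      have he : (a ::ₘ s).erase b = a ::ₘ s.erase b := by
        by_cases hba : b = a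
        · subst hba
          rw [Multiset.erase_cons_head, Multiset.cons_erase hb]
        · exact Multiset.erase_cons_tail s (fun hh => hba hh.symm)
      rw [he, Multiset.map_cons, Multiset.prod_cons]
    simp only [Multiset.map_cons, Multiset.prod_cons, Multiset.sum_cons,
      Multiset.erase_cons_head]
    have congr1 : (Multiset.map (fun b => G' b * (((a ::ₘ s).erase b).map fun c => G c p).prod) s)
        = Multiset.map (fun b => G a p * (G' b * ((s.erase b).map fun c => G c p).prod)) s := by
      apply Multiset.map_congr rfl
      intro b hb
      rw [key b hb]; ring
    rw [congr1, Multiset.sum_map_mul_left]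
    exact (h a).mul ih



def Mprod (s : Multiset ℕ) : ℕ := (s.map Nat.factorial).prod
def Cprod (s : Multiset ℕ) : ℕ := ∏ j ∈ s.toFinset, (s.count j).factorial

def PartF (n : ℕ) : Finset (Multiset ℕ) :=
  Finset.univ.image (fun P : Nat.Partition n => P.parts)

lemma mem_PartF {n : ℕ} {s : Multiset ℕ} :
    s ∈ PartF n ↔ s.sum = n ∧ ∀ a ∈ s, 0 < a := by
  constructor
  · intro h
    simp only [PartF, Finset.mem_image, Finset.mem_univ, true_and] at h
    obtain ⟨P, rfl⟩ := h
    exact ⟨P.parts_sum, fun a ha => P.parts_pos ha⟩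
  · rintro ⟨hs, hp⟩
    simp only [PartF, Finset.mem_image, Finset.mem_univ, true_and]
    exact ⟨⟨s, fun {i} hi => hp i hi, hs⟩, rfl⟩

lemma sum_partition_eq {n : ℕ} (F : Multiset ℕ → ℝ) :
    ∑ P : Nat.Partition n, F P.parts = ∑ s ∈ PartF n, F s := by
  rw [PartF, Finset.sum_image]
  intro P _ Q _ h
  cases P; cases Q; simpa using h

lemma Mprod_cons (b : ℕ) (m : Multiset ℕ) : Mprod (b ::ₘ m) = b.factorial * Mprod m := by
  simp [Mprod]

lemma Mprod_pos (m : Multiset ℕ) : 0 < Mprod m := by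
  rw [Mprod]
  apply Multiset.prod_pos
  intro y hy
  simp only [Multiset.mem_map] at hy
  obtain ⟨a, _, rfl⟩ := hy
  exact Nat.factorial_pos a

lemma Cprod_pos (m : Multiset ℕ) : 0 < Cprod m :=
  Finset.prod_pos fun j _ => Nat.factorial_pos _

lemma Cprod_cons (b : ℕ) (m : Multiset ℕ) : Cprod (b ::ₘ m) = (m.count b + 1) * Cprod m := by
  unfold Cprod
  rw [Multiset.toFinset_cons]
  by_cases hb : b ∈ m.toFinset
  · rw [Finset.insert_eq_self.mpr hb]
    rw [← Finset.mul_prod_erase _ _ hb, ← Finset.mul_prod_erase _ (fun j => (m.count j).factorial) hb]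
    have h2 : ∏ j ∈ m.toFinset.erase b, ((b ::ₘ m).count j).factorial
        = ∏ j ∈ m.toFinset.erase b, (m.count j).factorial := by
      apply Finset.prod_congr rfl
      intro j hj
      rw [Multiset.count_cons_of_ne (Finset.ne_of_mem_erase hj)]
    rw [h2, Multiset.count_cons_self, Nat.factorial_succ]
    ring
  · rw [Finset.prod_insert hb]
    have hbm : b ∉ m := fun h => hb (Multiset.mem_toFinset.mpr h)
    have hcb : m.count b = 0 := Multiset.count_eq_zero_of_notMem hbm
    have h2 : ∏ j ∈ m.toFinset, ((b ::ₘ m).count j).factorial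
        = ∏ j ∈ m.toFinset, (m.count j).factorial := by
      apply Finset.prod_congr rfl
      intro j hj
      rw [Multiset.count_cons_of_ne]
      intro h; exact hbm (h ▸ Multiset.mem_toFinset.mp hj)
    rw [h2, Multiset.count_cons_self, hcb]
    simp

noncomputable def fterm (G : ℕ → ℝ) (n : ℕ) (t : Multiset ℕ) (c : ℕ) : ℝ :=
  (n.factorial : ℝ) * (t.count c) * c / (Mprod t * Cprod t) * ((t.map G).prod)

noncomputable def gterm (G : ℕ → ℝ) (n : ℕ) (s : Multiset ℕ) (a : ℕ) : ℝ :=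
  (n.factorial : ℝ) * ((0 ::ₘ s).count a) / (Mprod s * Cprod s) *
    (G (a+1) * ((s.erase a).map G).prod)

lemma comb_core (G : ℕ → ℝ) (n : ℕ) :
    ∑ x ∈ (PartF n).sigma (fun s => (0 ::ₘ s).toFinset), gterm G n x.1 x.2
    = ∑ x ∈ (PartF (n+1)).sigma (fun t => t.toFinset), fterm G n x.1 x.2 := by
  apply Finset.sum_nbij'
    (i := fun y : Σ _ : Multiset ℕ, ℕ => (⟨(y.2+1) ::ₘ y.1.erase y.2, y.2+1⟩ : Σ _ : Multiset ℕ, ℕ))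
    (j := fun x : Σ _ : Multiset ℕ, ℕ =>
      (⟨if x.2 = 1 then x.1.erase 1 else (x.2 - 1) ::ₘ x.1.erase x.2, x.2 - 1⟩ : Σ _ : Multiset ℕ, ℕ))
  · -- hi : maps into A
    rintro ⟨s, a⟩ hy
    rw [Finset.mem_sigma] at hy ⊢
    dsimp only at hy ⊢
    obtain ⟨hs, ha⟩ := hy
    obtain ⟨hsum, hpos⟩ := mem_PartF.mp hs
    have h0s : (0 : ℕ) ∉ s := fun h => absurd (hpos 0 h) (lt_irrefl 0)
    have ha' : a = 0 ∨ a ∈ s := Multiset.mem_cons.mp (Multiset.mem_toFinset.mp ha)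
    constructor
    · rw [mem_PartF]
      constructor
      · rcases ha' with rfl | hmem
        · rw [Multiset.erase_of_notMem h0s, Multiset.sum_cons, hsum]
          omega
        · have : a + (s.erase a).sum = n := by
            rw [← Multiset.sum_cons, Multiset.cons_erase hmem, hsum]
          rw [Multiset.sum_cons]
          omega
      · intro b hb
        rcases Multiset.mem_cons.mp hb with rfl | hb'
        · omega
        · exact hpos b (Multiset.mem_of_mem_erase hb')
    · exact Multiset.mem_toFinset.mpr (Multiset.mem_cons_self _ _)
  · -- hj : maps back into B
    rintro ⟨t, c⟩ hx
    rw [Finset.mem_sigma] at hx ⊢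
    dsimp only at hx ⊢
    obtain ⟨ht, hc⟩ := hx
    obtain ⟨hsum, hpos⟩ := mem_PartF.mp ht
    have hct : c ∈ t := Multiset.mem_toFinset.mp hc
    have hc0 : 0 < c := hpos c hct
    have hsum' : c + (t.erase c).sum = n + 1 := by
      rw [← Multiset.sum_cons, Multiset.cons_erase hct, hsum]
    by_cases h1 : c = 1
    · subst h1
      rw [if_pos rfl]
      constructor
      · rw [mem_PartF]
        exact ⟨by omega, fun b hb => hpos b (Multiset.mem_of_mem_erase hb)⟩
      · simp
    · simp only [if_neg h1]
      have hc2 : 2 ≤ c := by omega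
      constructor
      · rw [mem_PartF]
        constructor
        · rw [Multiset.sum_cons]; omega
        · intro b hb
          rcases Multiset.mem_cons.mp hb with rfl | hb'
          · omega
          · exact hpos b (Multiset.mem_of_mem_erase hb')
      · apply Multiset.mem_toFinset.mpr
        exact Multiset.mem_cons_of_mem (Multiset.mem_cons_self _ _)
  · -- left inverse
    rintro ⟨s, a⟩ hy
    rw [Finset.mem_sigma] at hy
    dsimp only at hy ⊢
    obtain ⟨hs, ha⟩ := hy
    obtain ⟨hsum, hpos⟩ := mem_PartF.mp hs
    have h0s : (0 : ℕ) ∉ s := fun h => absurd (hpos 0 h) (lt_irrefl 0)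
    have ha' : a = 0 ∨ a ∈ s := Multiset.mem_cons.mp (Multiset.mem_toFinset.mp ha)
    rcases ha' with rfl | hmem
    · simp [Multiset.erase_of_notMem h0s]
    · have hane : a ≠ 0 := fun h => h0s (h ▸ hmem)
      have hne : a + 1 ≠ 1 := by omega
      rw [if_neg hne]
      simp only [Nat.add_sub_cancel, Multiset.erase_cons_head, Multiset.cons_erase hmem]
  · -- right inverse
    rintro ⟨t, c⟩ hx
    rw [Finset.mem_sigma] at hx
    dsimp only at hx ⊢
    obtain ⟨ht, hc⟩ := hx
    obtain ⟨hsum, hpos⟩ := mem_PartF.mp ht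
    have hct : c ∈ t := Multiset.mem_toFinset.mp hc
    have hc0 : 0 < c := hpos c hct
    by_cases h1 : c = 1
    · subst h1
      have h0e : (0 : ℕ) ∉ t.erase 1 := fun h =>
        absurd (hpos 0 (Multiset.mem_of_mem_erase h)) (lt_irrefl 0)
      simp [Multiset.erase_of_notMem h0e, Multiset.cons_erase hct]
    · have hc1 : c - 1 + 1 = c := by omega
      simp only [if_neg h1, Multiset.erase_cons_head, hc1, Multiset.cons_erase hct]
  · -- term equality
    rintro ⟨s, a⟩ hy
    rw [Finset.mem_sigma] at hy
    dsimp only at hy ⊢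
    obtain ⟨hs, ha⟩ := hy
    obtain ⟨hsum, hpos⟩ := mem_PartF.mp hs
    have h0s : (0 : ℕ) ∉ s := fun h => absurd (hpos 0 h) (lt_irrefl 0)
    have ha' : a = 0 ∨ a ∈ s := Multiset.mem_cons.mp (Multiset.mem_toFinset.mp ha)
    have hMs : ((Mprod s : ℕ) : ℝ) ≠ 0 := by exact_mod_cast (Mprod_pos s).ne'
    have hCs : ((Cprod s : ℕ) : ℝ) ≠ 0 := by exact_mod_cast (Cprod_pos s).ne'
    rcases ha' with rfl | hmem
    · -- a = 0 case
      have he : s.erase 0 = s := Multiset.erase_of_notMem h0s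
      have hcnt0 : (0 ::ₘ s).count 0 = 1 := by
        rw [Multiset.count_cons_self, Multiset.count_eq_zero_of_notMem h0s]
      simp only [gterm, fterm, Nat.zero_add, he, hcnt0]
      rw [Multiset.count_cons_self, Mprod_cons, Cprod_cons,
        Multiset.map_cons, Multiset.prod_cons]
      push_cast
      have h1 : ((s.count 1 : ℝ) + 1) ≠ 0 := by positivity
      field_simp
      ring
    · -- a ∈ s case
      have hane : a ≠ 0 := fun h => h0s (h ▸ hmem)
      have hse : a ::ₘ s.erase a = s := Multiset.cons_erase hmem
      have hMu : ((Mprod (s.erase a) : ℕ) : ℝ) ≠ 0 := by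
        exact_mod_cast (Mprod_pos (s.erase a)).ne'
      have hCu : ((Cprod (s.erase a) : ℕ) : ℝ) ≠ 0 := by
        exact_mod_cast (Cprod_pos (s.erase a)).ne'
      have h5 : (s.erase a).count a + 1 = s.count a := by
        rw [Multiset.count_erase_self]
        have := Multiset.count_pos.mpr hmem
        omega
      have hcnt : (0 ::ₘ s).count a = (s.erase a).count a + 1 := by
        rw [Multiset.count_cons_of_ne hane, ← h5]
      simp only [gterm, fterm]
      rw [hcnt]
      rw [show Mprod s = a.factorial * Mprod (s.erase a) by
        conv_lhs => rw [← hse]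
        rw [Mprod_cons]]
      rw [show Cprod s = ((s.erase a).count a + 1) * Cprod (s.erase a) by
        conv_lhs => rw [← hse]
        rw [Cprod_cons]]
      rw [Multiset.count_cons_self, Mprod_cons, Cprod_cons,
        Multiset.map_cons, Multiset.prod_cons]
      push_cast [Nat.factorial_succ]
      have h1 : (((s.erase a).count a : ℝ) + 1) ≠ 0 := by positivity
      have h2 : (((s.erase a).count (a+1) : ℝ) + 1) ≠ 0 := by positivity
      have h3 : ((a : ℝ) + 1) ≠ 0 := by positivity
      have h4 : ((a.factorial : ℕ) : ℝ) ≠ 0 := by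
        exact_mod_cast (Nat.factorial_pos a).ne'
      field_simp

lemma comb (G : ℕ → ℝ) (n : ℕ) :
    ∑ t ∈ PartF (n+1), ((n+1).factorial : ℝ) / (Mprod t) * (1 / (Cprod t)) * ((t.map G).prod)
    = G 1 * ∑ s ∈ PartF n, (n.factorial : ℝ) / (Mprod s) * (1 / (Cprod s)) * ((s.map G).prod)
      + ∑ s ∈ PartF n, (n.factorial : ℝ) / (Mprod s) * (1 / (Cprod s)) *
          ((s.map (fun a => G (a+1) * ((s.erase a).map G).prod)).sum) := by
  have hL : ∀ t ∈ PartF (n+1),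
      ((n+1).factorial : ℝ) / (Mprod t) * (1 / (Cprod t)) * ((t.map G).prod)
      = ∑ c ∈ t.toFinset, fterm G n t c := by
    intro t ht
    have hMt : ((Mprod t : ℕ) : ℝ) ≠ 0 := by exact_mod_cast (Mprod_pos t).ne'
    have hCt : ((Cprod t : ℕ) : ℝ) ≠ 0 := by exact_mod_cast (Cprod_pos t).ne'
    have h1 : (n + 1 : ℕ) = ∑ c ∈ t.toFinset, t.count c * c := by
      rw [← (mem_PartF.mp ht).1]
      conv_lhs => rw [← Multiset.map_id t]
      rw [Finset.sum_multiset_map_count]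
      simp [smul_eq_mul]
    have h2 : (((n+1).factorial : ℕ) : ℝ)
        = (n.factorial : ℝ) * ∑ c ∈ t.toFinset, (t.count c : ℝ) * c := by
      rw [Nat.factorial_succ]
      push_cast [h1]
      ring
    rw [h2, Finset.mul_sum, Finset.sum_div, Finset.sum_mul, Finset.sum_mul]
    apply Finset.sum_congr rfl
    intro c hc
    rw [fterm]
    push_cast
    ring
  have hR : ∀ s ∈ PartF n,
      G 1 * ((n.factorial : ℝ) / (Mprod s) * (1 / (Cprod s)) * ((s.map G).prod))
      + (n.factorial : ℝ) / (Mprod s) * (1 / (Cprod s)) *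
          ((s.map (fun a => G (a+1) * ((s.erase a).map G).prod)).sum)
      = ∑ a ∈ (0 ::ₘ s).toFinset, gterm G n s a := by
    intro s hs
    have hMs : ((Mprod s : ℕ) : ℝ) ≠ 0 := by exact_mod_cast (Mprod_pos s).ne'
    have hCs : ((Cprod s : ℕ) : ℝ) ≠ 0 := by exact_mod_cast (Cprod_pos s).ne'
    have h0s : (0 : ℕ) ∉ s := fun h =>
      absurd ((mem_PartF.mp hs).2 0 h) (lt_irrefl 0)
    rw [Multiset.toFinset_cons, Finset.sum_insert (by simp [h0s])]
    have e0 : (0 ::ₘ s).count 0 = 1 := by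
      rw [Multiset.count_cons_self, Multiset.count_eq_zero_of_notMem h0s]
    have e1 : s.erase 0 = s := Multiset.erase_of_notMem h0s
    congr 1
    · rw [gterm, e0, e1]
      push_cast
      ring
    · rw [Finset.sum_multiset_map_count, Finset.mul_sum]
      apply Finset.sum_congr rfl
      intro a ha
      have hane : a ≠ 0 := fun h =>
        h0s (h ▸ Multiset.mem_toFinset.mp ha)
      rw [gterm, Multiset.count_cons_of_ne hane, nsmul_eq_mul]
      push_cast
      ring
  rw [Finset.sum_congr rfl hL, Finset.mul_sum, ← Finset.sum_add_distrib,
    Finset.sum_congr rfl hR, Finset.sum_sigma' (PartF n), Finset.sum_sigma' (PartF (n+1)),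
    comb_core]


noncomputable def Bsum (N : ℕ) (x : ℕ → ℝ) (n : ℕ) (q : ℝ) : ℝ :=
  ∑ s ∈ PartF n, ((n.factorial : ℝ) / (Mprod s)) * (1 / (Cprod s)) *
    ((s.map (fun a => gfun N x a q)).prod)

lemma hasDerivAt_expB (N : ℕ) (x : ℕ → ℝ) (n : ℕ) (p : ℝ) :
    HasDerivAt (fun q => Real.exp (gfun N x 0 q) * Bsum N x n q)
      (Real.exp (gfun N x 0 p) * Bsum N x (n+1) p) p := by
  have hexp : HasDerivAt (fun q => Real.exp (gfun N x 0 q))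
      (Real.exp (gfun N x 0 p) * gfun N x 1 p) p :=
    (hasDerivAt_gfun N x 0 p).exp
  have hB : HasDerivAt (fun q => Bsum N x n q)
      (∑ s ∈ PartF n, ((n.factorial : ℝ)/(Mprod s)) * (1/(Cprod s)) *
        ((s.map (fun a => gfun N x (a+1) p *
          ((s.erase a).map (fun b => gfun N x b p)).prod)).sum)) p := by
    unfold Bsum
    apply HasDerivAt.fun_sum
    intro s _
    exact (hasDerivAt_multiset_prod _ _ p (fun a => hasDerivAt_gfun N x a p) s).const_mul _
  have hmul := hexp.mul hB
  refine hmul.congr_deriv ?_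
  unfold Bsum
  rw [comb (fun a => gfun N x a p) n]
  ring

lemma iter_eq (N : ℕ) (x : ℕ → ℝ) (n : ℕ) :
    iteratedDeriv n (fun q : ℝ => Real.exp (gfun N x 0 q))
      = fun p => Real.exp (gfun N x 0 p) * Bsum N x n p := by
  induction n with
  | zero =>
    funext p
    rw [iteratedDeriv_zero]
    have h0 : PartF 0 = {(0 : Multiset ℕ)} := by
      apply Finset.ext
      intro s
      simp only [mem_PartF, Finset.mem_singleton]
      constructor
      · rintro ⟨hs, hp⟩
        rw [Multiset.eq_zero_iff_forall_notMem]
        intro a ha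
        have := hp a ha
        have := Multiset.single_le_sum (fun y hy => Nat.zero_le y) a ha
        omega
      · rintro rfl
        simp
    have : Bsum N x 0 p = 1 := by
      rw [Bsum, h0]
      simp [Mprod, Cprod]
    rw [this, mul_one]
  | succ n ih =>
    funext p
    rw [iteratedDeriv_succ, ih]
    exact (hasDerivAt_expB N x n p).deriv

theorem faa_di_bruno_exponential (N ℓ : ℕ) (x : ℕ → ℝ) (p : ℝ) :
    iteratedDeriv ℓ (fun q : ℝ => Real.exp (∑ j ∈ Finset.Icc 1 N, q ^ j * x j)) p
      = Real.exp (∑ j ∈ Finset.Icc 1 N, p ^ j * x j) *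
          ∑ P : Nat.Partition ℓ,
            ((ℓ.factorial : ℝ) / ((P.parts.map Nat.factorial).prod : ℕ))
            * (1 / ((∏ j ∈ P.parts.toFinset, (P.parts.count j).factorial : ℕ) : ℝ))
            * ((P.parts.map (fun a =>
                ∑ j ∈ Finset.Icc 1 N, (j.descFactorial a : ℝ) * p ^ (j - a) * x j)).prod) := by
  have hgf : ∀ q : ℝ, (∑ j ∈ Finset.Icc 1 N, q ^ j * x j) = gfun N x 0 q := by
    intro q
    unfold gfun
    apply Finset.sum_congr rfl
    intro j _
    simp
  have hf : (fun q : ℝ => Real.exp (∑ j ∈ Finset.Icc 1 N, q ^ j * x j))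
      = fun q => Real.exp (gfun N x 0 q) := by
    funext q
    rw [hgf q]
  rw [hf, iter_eq, hgf p]
  congr 1
  rw [sum_partition_eq (fun s => ((ℓ.factorial : ℝ) / ((s.map Nat.factorial).prod : ℕ))
    * (1 / ((∏ j ∈ s.toFinset, (s.count j).factorial : ℕ) : ℝ))
    * ((s.map (fun a =>
        ∑ j ∈ Finset.Icc 1 N, (j.descFactorial a : ℝ) * p ^ (j - a) * x j)).prod))]
  rfl
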